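/- Assume the standing hypotheses with $C_{\phi,w}$ densely defined, $\alpha\in(0,1]$, $w_\alpha$ as above, and $\mathsf{h}_{\phi,w_\alpha}<\infty$ a.e. $[\mu]$. Then for every measurable $f\colon X\to[0,\infty]$, $\mathsf{E}_{\phi,w_\alpha}(f)\cdot\mathsf{E}_{\phi,w}(\mathsf{h}_{\phi,w}^\alpha) = \mathsf{E}_{\phi,w}(f\,\mathsf{h}_{\phi,w}^\alpha)$ a.e. $[\mu_w]$. -/

import Mathlib

open MeasureTheory ENNReal NNReal Filter Topology

variable {X : Type*} [MeasurableSpace X]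

/-- The measure `μ_w` with density `|w|²` with respect to `μ`. -/
noncomputable def wcMeasure (μ : Measure X) (w : X → ℂ) : Measure X :=
  μ.withDensity fun x => (‖w x‖₊ : ℝ≥0∞) ^ 2

/-- The Radon–Nikodym derivative `h_{φ,w} = d(μ_w ∘ φ⁻¹)/dμ`. -/
noncomputable def wcDeriv (μ : Measure X) (w : X → ℂ) (φ : X → X) : X → ℝ≥0∞ :=
  ((wcMeasure μ w).map φ).rnDeriv μ

/-- The modified weight `w_α = w · (h_{φ,w}/(h_{φ,w}∘φ))^{α/2}` (interpreted a.e.). -/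
noncomputable def wcAlpha (μ : Measure X) (w : X → ℂ) (φ : X → X) (α : ℝ) : X → ℂ :=
  fun x => w x * (((wcDeriv μ w φ x / wcDeriv μ w φ (φ x)) ^ (α / 2)).toReal : ℂ)

/-- `E` is (a version of) the conditional expectation of the nonnegative function `f`
with respect to the σ-algebra `φ⁻¹(𝒜)` and the measure `ν`. -/
def IsCondExp (φ : X → X) (ν : Measure X) (f E : X → ℝ≥0∞) : Prop :=
  Measurable[MeasurableSpace.comap φ inferInstance] E ∧
    ∀ s : Set X, MeasurableSet s → ∫⁻ x in φ ⁻¹' s, E x ∂ν = ∫⁻ x in φ ⁻¹' s, f x ∂ν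

/-- `g = E ∘ φ⁻¹`: the measurable function with `g ∘ φ = E` a.e. `[ν]`,
vanishing a.e. `[μ]` on the set where `h = 0`. -/
def IsQuot (φ : X → X) (μ ν : Measure X) (h : X → ℝ≥0∞) (E g : X → ℝ≥0∞) : Prop :=
  Measurable g ∧ (∀ᵐ x ∂ν, g (φ x) = E x) ∧ (∀ᵐ x ∂μ, h x = 0 → g x = 0)

/-- `E` is (a version of) the conditional expectation of the complex function `f`
with respect to the σ-algebra `φ⁻¹(𝒜)` and the measure `ν`. -/
def IsCondExpC (φ : X → X) (ν : Measure X) (f E : X → ℂ) : Prop :=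
  Measurable[MeasurableSpace.comap φ inferInstance] E ∧
    ∀ s : Set X, MeasurableSet s → ν (φ ⁻¹' s) < ⊤ →
      ∫ x in φ ⁻¹' s, E x ∂ν = ∫ x in φ ⁻¹' s, f x ∂ν

/-- `f_w = χ_{{w ≠ 0}} f / w`. -/
noncomputable def fw (w f : X → ℂ) : X → ℂ := fun x => if w x = 0 then 0 else f x / w x

/-- Doob–Dynkin for `ℝ≥0∞`-valued functions. -/
lemma exists_factor {φ : X → X} {E : X → ℝ≥0∞}
    (hE : Measurable[MeasurableSpace.comap φ inferInstance] E) :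
    ∃ G : X → ℝ≥0∞, Measurable G ∧ ∀ x, G (φ x) = E x := by
  have hset : ∀ q : ℚ, ∃ t, MeasurableSet t ∧
      φ ⁻¹' t = E ⁻¹' (Set.Ioi (Real.toNNReal q : ℝ≥0∞)) := fun q =>
    MeasurableSpace.measurableSet_comap.mp (hE measurableSet_Ioi)
  choose t ht hteq using hset
  refine ⟨fun y => ⨆ q : ℚ, Set.indicator (t q) (fun _ => (Real.toNNReal q : ℝ≥0∞)) y,
    Measurable.iSup fun q => measurable_const.indicator (ht q), fun x => ?_⟩
  have hval : ∀ q : ℚ, Set.indicator (t q) (fun _ => (Real.toNNReal q : ℝ≥0∞)) (φ x)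
      = if (Real.toNNReal q : ℝ≥0∞) < E x then (Real.toNNReal q : ℝ≥0∞) else 0 := by
    intro q
    by_cases hx : φ x ∈ t q
    · have hmem : x ∈ φ ⁻¹' t q := hx
      rw [hteq q] at hmem
      simp only [Set.mem_preimage, Set.mem_Ioi] at hmem
      rw [Set.indicator_of_mem hx, if_pos hmem]
    · have hmem : x ∉ φ ⁻¹' t q := hx
      rw [hteq q] at hmem
      simp only [Set.mem_preimage, Set.mem_Ioi] at hmem
      simp [Set.indicator_of_notMem hx, hmem]
  refine le_antisymm (iSup_le fun q => ?_) ?_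
  · rw [hval q]; split_ifs with hlt
    exacts [hlt.le, zero_le]
  · by_contra hcon
    rw [not_le] at hcon
    obtain ⟨q, _, h1, h2⟩ := ENNReal.lt_iff_exists_rat_btwn.mp hcon
    have hle := le_iSup (fun q : ℚ =>
      Set.indicator (t q) (fun _ => (Real.toNNReal q : ℝ≥0∞)) (φ x)) q
    rw [hval q, if_pos h2] at hle
    exact absurd (hle.trans_lt h1) (lt_irrefl _)

lemma isCondExp_mul {φ : X → X} (hφ : Measurable φ) {ν : Measure X}
    {f E : X → ℝ≥0∞} (hfm : Measurable f) (hE : IsCondExp φ ν f E)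
    {G : X → ℝ≥0∞} (hG : Measurable G) {s : Set X} (hs : MeasurableSet s) :
    ∫⁻ x in φ ⁻¹' s, G (φ x) * E x ∂ν = ∫⁻ x in φ ⁻¹' s, G (φ x) * f x ∂ν := by
  have hEm : Measurable E := hE.1.mono hφ.comap_le le_rfl
  refine Measurable.ennreal_induction
    (motive := fun G => ∫⁻ x in φ ⁻¹' s, G (φ x) * E x ∂ν = ∫⁻ x in φ ⁻¹' s, G (φ x) * f x ∂ν)
    ?_ ?_ ?_ hG
  · intro c t ht
    have key : ∀ g : X → ℝ≥0∞, Measurable g →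
        ∫⁻ x in φ ⁻¹' s, (Set.indicator t fun _ => c) (φ x) * g x ∂ν
          = c * ∫⁻ x in φ ⁻¹' (s ∩ t), g x ∂ν := by
      intro g hg
      have hpt : ∀ x, (Set.indicator t fun _ => c) (φ x) * g x
          = Set.indicator (φ ⁻¹' t) (fun y => c * g y) x := by
        intro x
        by_cases hx : φ x ∈ t <;> simp [Set.indicator, hx, Set.mem_preimage]
      simp_rw [hpt]
      rw [lintegral_indicator (hφ ht), Measure.restrict_restrict (hφ ht),
        lintegral_const_mul c hg, Set.preimage_inter, Set.inter_comm]
    rw [key E hEm, key f hfm, hE.2 (s ∩ t) (hs.inter ht)]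
  · intro g₁ g₂ _ hg₁ hg₂ ih₁ ih₂
    simp only [Pi.add_apply, add_mul]
    rw [lintegral_add_left (f := fun x => g₁ (φ x) * E x) ((hg₁.comp hφ).mul hEm),
      lintegral_add_left (f := fun x => g₁ (φ x) * f x) ((hg₁.comp hφ).mul hfm), ih₁, ih₂]
  · intro g hgm hmono ih
    simp only [ENNReal.iSup_mul]
    rw [lintegral_iSup (f := fun n x => g n (φ x) * E x) (fun n => ((hgm n).comp hφ).mul hEm)
        (fun n m hnm x => mul_le_mul_left (hmono hnm (φ x)) _),
      lintegral_iSup (f := fun n x => g n (φ x) * f x) (fun n => ((hgm n).comp hφ).mul hfm)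
        (fun n m hnm x => mul_le_mul_left (hmono hnm (φ x)) _)]
    exact iSup_congr ih

/-- If `h_{φ,w_α} < ∞` a.e. `[μ]`, then for every measurable
`f : X → [0,∞]`, `E_{φ,w_α}(f) · E_{φ,w}(h_{φ,w}^α) = E_{φ,w}(f · h_{φ,w}^α)` a.e. `[μ_w]`. -/
theorem aluthge_wco_condexp_product
    (μ : Measure X) [SigmaFinite μ] (w : X → ℂ) (φ : X → X)
    (hw : Measurable w) (hφ : Measurable φ)
    (habs : (wcMeasure μ w).map φ ≪ μ)
    (hfin : ∀ᵐ x ∂μ, wcDeriv μ w φ x < ⊤)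
    (α : ℝ) (hα : α ∈ Set.Ioc (0 : ℝ) 1)
    (hfinα : ∀ᵐ x ∂μ, wcDeriv μ (wcAlpha μ w φ α) φ x < ⊤)
    (f : X → ℝ≥0∞) (hf : Measurable f)
    (E₁ E₂ E₃ : X → ℝ≥0∞)
    (hE₁ : IsCondExp φ (wcMeasure μ w) (fun x => wcDeriv μ w φ x ^ α) E₁)
    (hE₂ : IsCondExp φ (wcMeasure μ w) (fun x => f x * wcDeriv μ w φ x ^ α) E₂)
    (hE₃ : IsCondExp φ (wcMeasure μ (wcAlpha μ w φ α)) f E₃) :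
    ∀ᵐ x ∂(wcMeasure μ w), E₃ x * E₁ x = E₂ x := by
  classical
  set h : X → ℝ≥0∞ := wcDeriv μ w φ with hhdef
  have hhm : Measurable h := Measure.measurable_rnDeriv _ _
  have hhφ : Measurable fun x => h (φ x) := hhm.comp hφ
  set k : X → ℝ≥0∞ := fun x =>
    (ENNReal.ofReal (((h x / h (φ x)) ^ (α / 2)).toReal)) ^ 2 with hkdef
  have hkm : Measurable k :=
    ((ENNReal.measurable_ofReal.comp
      (ENNReal.measurable_toReal.comp ((hhm.div hhφ).pow_const (α / 2)))).pow_const 2)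
  haveI : SigmaFinite (wcMeasure μ w) :=
    SigmaFinite.withDensity_of_ne_top' fun x => ENNReal.pow_ne_top ENNReal.coe_ne_top
  haveI : SigmaFinite (μ.withDensity h) :=
    SigmaFinite.withDensity_of_ne_top (hfin.mono fun x hx => hx.ne)
  have hν : μ.withDensity h = (wcMeasure μ w).map φ :=
    Measure.withDensity_rnDeriv_eq _ _ habs
  -- the measure `μ_{w_α}` as a density over `μ_w`
  have hμα : wcMeasure μ (wcAlpha μ w φ α) = (wcMeasure μ w).withDensity k := by
    have hpt : (fun x => ((‖wcAlpha μ w φ α x‖₊ : ℝ≥0∞)) ^ 2)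
        = (fun x => ((‖w x‖₊ : ℝ≥0∞) ^ 2)) * k := by
      funext x
      simp only [wcAlpha, hkdef, ← hhdef, Pi.mul_apply]
      rw [nnnorm_mul, ENNReal.coe_mul, mul_pow]
      congr 1
      rw [Complex.nnnorm_real, ← enorm_eq_nnnorm, Real.enorm_eq_ofReal ENNReal.toReal_nonneg]
    rw [wcMeasure, wcMeasure, hpt,
      withDensity_mul μ ((hw.nnnorm.coe_nnreal_ennreal).pow_const 2) hkm]
  -- a.e. facts with respect to μ_w
  have hac : wcMeasure μ w ≪ μ := withDensity_absolutelyContinuous μ _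
  have h1 : ∀ᵐ x ∂wcMeasure μ w, h x ≠ ∞ :=
    (hfin.mono fun x hx => hx.ne).filter_mono hac.ae_le
  have hmeas0 : MeasurableSet (h ⁻¹' {0}) := hhm (measurableSet_singleton 0)
  have hmeastop : MeasurableSet (h ⁻¹' {∞}) := hhm (measurableSet_singleton ∞)
  have hν0 : ∀ t : Set X, MeasurableSet t →
      wcMeasure μ w (φ ⁻¹' t) = ∫⁻ y in t, h y ∂μ := by
    intro t htm
    rw [← Measure.map_apply hφ htm, ← hν, withDensity_apply _ htm]
  have hphi0 : ∀ᵐ x ∂wcMeasure μ w, h (φ x) ≠ 0 := by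
    rw [ae_iff]
    have hset : {x | ¬ h (φ x) ≠ 0} = φ ⁻¹' (h ⁻¹' {0}) := by ext x; simp
    rw [hset, hν0 _ hmeas0]
    calc ∫⁻ y in h ⁻¹' {0}, h y ∂μ
        = ∫⁻ _ in h ⁻¹' {0}, 0 ∂μ :=
          setLIntegral_congr_fun hmeas0 (fun y hy => hy)
      _ = 0 := lintegral_zero
  have hphitop : ∀ᵐ x ∂wcMeasure μ w, h (φ x) ≠ ∞ := by
    rw [ae_iff]
    have hset : {x | ¬ h (φ x) ≠ ∞} = φ ⁻¹' (h ⁻¹' {∞}) := by ext x; simp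
    rw [hset, hν0 _ hmeastop]
    have hz : μ (h ⁻¹' {∞}) = 0 := by
      have := ae_iff.mp hfin
      convert this using 2
      ext y; simp [lt_top_iff_ne_top]
    exact setLIntegral_measure_zero _ _ hz
  have hk_ae : ∀ᵐ x ∂wcMeasure μ w, k x = h x ^ α / h (φ x) ^ α := by
    filter_upwards [h1, hphi0, hphitop] with x hx1 hx2 hx3
    have hdiv : h x / h (φ x) ≠ ∞ := (ENNReal.div_lt_top hx1 hx2).ne
    have hrt : (h x / h (φ x)) ^ (α / 2) ≠ ∞ :=
      ENNReal.rpow_ne_top_of_nonneg (by linarith [hα.1]) hdiv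
    show (ENNReal.ofReal (((h x / h (φ x)) ^ (α / 2)).toReal)) ^ 2
        = h x ^ α / h (φ x) ^ α
    rw [ENNReal.ofReal_toReal hrt, ← ENNReal.rpow_natCast _ 2, ← ENNReal.rpow_mul]
    norm_num
    rw [ENNReal.div_rpow_of_nonneg _ _ hα.1.le]
  -- transfer of integrals between μ_{w_α} and μ_w
  have transfer : ∀ (F : X → ℝ≥0∞), Measurable F → ∀ s : Set X, MeasurableSet s →
      ∫⁻ x in φ ⁻¹' s, h (φ x) ^ α * F x ∂(wcMeasure μ (wcAlpha μ w φ α))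
        = ∫⁻ x in φ ⁻¹' s, F x * h x ^ α ∂(wcMeasure μ w) := by
    intro F hF s hs
    rw [hμα, restrict_withDensity (hφ hs),
      lintegral_withDensity_eq_lintegral_mul _ hkm (g := fun x => h (φ x) ^ α * F x) ((hhφ.pow_const α).mul hF)]
    refine lintegral_congr_ae (ae_restrict_of_ae ?_)
    filter_upwards [hk_ae, hphi0, hphitop] with x hkx hx2 hx3
    have hb0 : h (φ x) ^ α ≠ 0 := by
      simp only [ne_eq, ENNReal.rpow_eq_zero_iff, not_or, not_and]
      exact ⟨fun h0 => absurd h0 hx2, fun htop => absurd htop hx3⟩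
    have hbt : h (φ x) ^ α ≠ ∞ := ENNReal.rpow_ne_top_of_nonneg hα.1.le hx3
    show k x * (h (φ x) ^ α * F x) = F x * h x ^ α
    rw [hkx, ← mul_assoc, ENNReal.div_mul_cancel hb0 hbt, mul_comm]
  obtain ⟨G₃, hG₃m, hG₃⟩ := exists_factor hE₃.1
  have mainEq : ∀ s : Set X, MeasurableSet s →
      ∫⁻ x in φ ⁻¹' s, E₃ x * E₁ x ∂(wcMeasure μ w)
        = ∫⁻ x in φ ⁻¹' s, E₂ x ∂(wcMeasure μ w) := by
    intro s hs
    have c1 : ∫⁻ x in φ ⁻¹' s, E₃ x * E₁ x ∂(wcMeasure μ w)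
        = ∫⁻ x in φ ⁻¹' s, G₃ (φ x) * E₁ x ∂(wcMeasure μ w) :=
      lintegral_congr fun x => by rw [hG₃ x]
    have c2 : ∫⁻ x in φ ⁻¹' s, G₃ (φ x) * E₁ x ∂(wcMeasure μ w)
        = ∫⁻ x in φ ⁻¹' s, G₃ (φ x) * h x ^ α ∂(wcMeasure μ w) :=
      isCondExp_mul hφ (hhm.pow_const α) hE₁ hG₃m hs
    have c3 : ∫⁻ x in φ ⁻¹' s, G₃ (φ x) * h x ^ α ∂(wcMeasure μ w)
        = ∫⁻ x in φ ⁻¹' s, h (φ x) ^ α * G₃ (φ x) ∂(wcMeasure μ (wcAlpha μ w φ α)) :=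
      (transfer (fun x => G₃ (φ x)) (hG₃m.comp hφ) s hs).symm
    have c4 : ∫⁻ x in φ ⁻¹' s, h (φ x) ^ α * G₃ (φ x) ∂(wcMeasure μ (wcAlpha μ w φ α))
        = ∫⁻ x in φ ⁻¹' s, h (φ x) ^ α * E₃ x ∂(wcMeasure μ (wcAlpha μ w φ α)) :=
      lintegral_congr fun x => by rw [hG₃ x]
    have c5 : ∫⁻ x in φ ⁻¹' s, h (φ x) ^ α * E₃ x ∂(wcMeasure μ (wcAlpha μ w φ α))
        = ∫⁻ x in φ ⁻¹' s, h (φ x) ^ α * f x ∂(wcMeasure μ (wcAlpha μ w φ α)) :=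
      isCondExp_mul hφ hf hE₃ (hhm.pow_const α) hs
    have c6 : ∫⁻ x in φ ⁻¹' s, h (φ x) ^ α * f x ∂(wcMeasure μ (wcAlpha μ w φ α))
        = ∫⁻ x in φ ⁻¹' s, f x * h x ^ α ∂(wcMeasure μ w) :=
      transfer f hf s hs
    have c7 : ∫⁻ x in φ ⁻¹' s, f x * h x ^ α ∂(wcMeasure μ w)
        = ∫⁻ x in φ ⁻¹' s, E₂ x ∂(wcMeasure μ w) := (hE₂.2 s hs).symm
    exact c1.trans (c2.trans (c3.trans (c4.trans (c5.trans (c6.trans c7)))))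
  -- uniqueness via the trimmed measure
  have hm : MeasurableSpace.comap φ inferInstance ≤ (inferInstance : MeasurableSpace X) :=
    hφ.comap_le
  haveI hsf : SigmaFinite ((wcMeasure μ w).trim hm) := by
    refine ⟨⟨⟨fun n => φ ⁻¹' (spanningSets (μ.withDensity h) n), fun _ => trivial,
      fun n => ?_, ?_⟩⟩⟩
    · rw [trim_measurableSet_eq hm ⟨_, measurableSet_spanningSets _ n, rfl⟩,
        ← Measure.map_apply hφ (measurableSet_spanningSets _ n), ← hν]
      exact measure_spanningSets_lt_top _ n
    · rw [← Set.preimage_iUnion, iUnion_spanningSets, Set.preimage_univ]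
  refine ae_eq_of_ae_eq_trim
    (ae_eq_of_forall_setLIntegral_eq_of_sigmaFinite
      (μ := (wcMeasure μ w).trim hm)
      (f := fun x => E₃ x * E₁ x) (g := E₂) (hE₃.1.mul hE₁.1) hE₂.1 ?_)
  intro u hu _
  obtain ⟨u', hu', rfl⟩ := hu
  rw [restrict_trim hm _ (⟨u', hu', rfl⟩ : MeasurableSet[MeasurableSpace.comap φ inferInstance] _),
    lintegral_trim hm (f := fun x => E₃ x * E₁ x) (hE₃.1.mul hE₁.1), lintegral_trim hm hE₂.1]
  exact mainEq u' hu'
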